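/- Let m > 0 and Q > 0 be reals, and let u, z : ℕ → ℝ be sequences satisfying, for all k ≥ 1: u_{2k} − u_{2k+1} = m·(z_{2k} − z_{2k+1}), u_{2k} − u_{2k−1} = m·(z_{2k−1} − z_{2k}), u_{2k+2} − u_{2k} = (m/Q)·(z_{2k+2} − z_{2k}), and u_{2k+1} − u_{2k−1} = (m/Q)·(z_{2k−1} − z_{2k+1}). Then for all n ≥ 2: (1 + Q)·z_{n+1} = 2·Q·z_n + (1 − Q)·z_{n−1}. -/

import Mathlib

/-- The reflected-wave traces between two opposite contacts satisfy the linear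
difference equation `(1+Q)·z_{n+1} = 2Q·z_n + (1−Q)·z_{n−1}`. -/
theorem reflection_recursion (m Q : ℝ) (hm : 0 < m) (hQ : 0 < Q)
    (u z : ℕ → ℝ)
    (h1 : ∀ k ≥ 1, u (2 * k) - u (2 * k + 1) = m * (z (2 * k) - z (2 * k + 1)))
    (h2 : ∀ k ≥ 1, u (2 * k) - u (2 * k - 1) = m * (z (2 * k - 1) - z (2 * k)))
    (h3 : ∀ k ≥ 1, u (2 * k + 2) - u (2 * k) = (m / Q) * (z (2 * k + 2) - z (2 * k)))
    (h4 : ∀ k ≥ 1, u (2 * k + 1) - u (2 * k - 1) = (m / Q) * (z (2 * k - 1) - z (2 * k + 1))) :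
    ∀ n ≥ 2, (1 + Q) * z (n + 1) = 2 * Q * z n + (1 - Q) * z (n - 1) := by
  have hm' := hm.ne'
  have hQ' := hQ.ne'
  intro n hn
  rcases Nat.even_or_odd n with ⟨k, hk⟩ | ⟨k, hk⟩
  · -- n = 2k, k ≥ 1
    have hk1 : k ≥ 1 := by omega
    have ha := h1 k hk1
    have hb := h2 k hk1
    have hd := h4 k hk1
    have hn1 : n + 1 = 2 * k + 1 := by omega
    have hn2 : n - 1 = 2 * k - 1 := by omega
    have hne : n = 2 * k := by omega
    rw [hn1, hn2, hne]
    have key : (m / Q) * (z (2 * k - 1) - z (2 * k + 1))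
        = m * (z (2 * k - 1) - 2 * z (2 * k) + z (2 * k + 1)) := by linarith
    have h5 : z (2 * k - 1) - z (2 * k + 1)
        = Q * (z (2 * k - 1) - 2 * z (2 * k) + z (2 * k + 1)) := by
      field_simp at key
      exact mul_left_cancel₀ hm' (by rw [key])
    linarith
  · -- n = 2k+1, k ≥ 1
    have hk1 : k ≥ 1 := by omega
    have ha := h1 k hk1
    have hb := h2 (k + 1) (by omega)
    have hc := h3 k hk1
    have hb' : u (2 * k + 2) - u (2 * k + 1) = m * (z (2 * k + 1) - z (2 * k + 2)) := by
      have e2 : 2 * (k + 1) - 1 = 2 * k + 1 := by omega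
      have e1 : 2 * (k + 1) = 2 * k + 2 := by ring
      rw [e2, e1] at hb
      exact hb
    have hn1 : n + 1 = 2 * k + 2 := by omega
    have hn2 : n - 1 = 2 * k := by omega
    have hne : n = 2 * k + 1 := by omega
    rw [hn1, hn2, hne]
    have key : (m / Q) * (z (2 * k + 2) - z (2 * k))
        = m * (2 * z (2 * k + 1) - z (2 * k + 2) - z (2 * k)) := by linarith
    have h5 : z (2 * k + 2) - z (2 * k)
        = Q * (2 * z (2 * k + 1) - z (2 * k + 2) - z (2 * k)) := by
      field_simp at key
      exact mul_left_cancel₀ hm' (by rw [key])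
    linarith
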